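/- Define η_t = 3/(t+3) and A_t = 6/((t+1)(t+2)(t+3)). Then for every k ≥ 1, the sum ∑_{t=0}^{k} (A_k·η_t³)/A_t ≤ 27·(k+1)/(k+3)³. -/

import Mathlib

theorem sum_bound (η A : ℕ → ℝ) (hη : ∀ t, η t = 3 / ((t : ℝ) + 3))
    (hA : ∀ t, A t = 6 / (((t : ℝ) + 1) * ((t : ℝ) + 2) * ((t : ℝ) + 3))) :
    ∀ k : ℕ, 1 ≤ k →
      ∑ t ∈ Finset.range (k + 1), A k * (η t) ^ 3 / A t ≤
        27 * ((k : ℝ) + 1) / ((k : ℝ) + 3) ^ 3 := by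
  have hApos : ∀ t : ℕ, 0 < A t := by
    intro t
    rw [hA]
    positivity
  refine Nat.le_induction ?_ ?_
  · -- base case k = 1
    rw [Finset.sum_range_succ, Finset.sum_range_one, hη 0, hη 1, hA 0, hA 1]
       
    norm_num
  · intro k hk ih
    rw [Finset.sum_range_succ]
    have key : ∑ t ∈ Finset.range (k + 1), A (k + 1) * η t ^ 3 / A t
        = (A (k + 1) / A k) * ∑ t ∈ Finset.range (k + 1), A k * η t ^ 3 / A t := by
      rw [Finset.mul_sum]
      refine Finset.sum_congr rfl fun t _ => ?_
      have hAt := (hApos t).ne'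
      have hAk := (hApos k).ne'
      field_simp
    rw [key]
    have hratio : A (k + 1) / A k = ((k : ℝ) + 1) / ((k : ℝ) + 4) := by
      rw [hA, hA]
      push_cast
      have h1 : (0:ℝ) < (k:ℝ) + 1 := by positivity
      have h2 : (0:ℝ) < (k:ℝ) + 2 := by positivity
      have h3 : (0:ℝ) < (k:ℝ) + 3 := by positivity
      have h4 : (0:ℝ) < (k:ℝ) + 4 := by positivity
      field_simp
      ring
    have hlast : A (k + 1) * η (k + 1) ^ 3 / A (k + 1) = η (k + 1) ^ 3 := by
      rw [mul_comm, mul_div_assoc, div_self (hApos (k+1)).ne', mul_one]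
    rw [hratio, hlast, hη (k + 1)]
    push_cast
    have hstep : ((k : ℝ) + 1) / ((k : ℝ) + 4) *
          (27 * ((k : ℝ) + 1) / ((k : ℝ) + 3) ^ 3) + (3 / ((k : ℝ) + 1 + 3)) ^ 3
        ≤ 27 * ((k : ℝ) + 1 + 1) / ((k : ℝ) + 1 + 3) ^ 3 := by
      have h3 : (0:ℝ) < (k:ℝ) + 3 := by positivity
      have h4 : (0:ℝ) < (k:ℝ) + 4 := by positivity
      rw [div_mul_div_comm, div_pow, div_add_div _ _ (by positivity) (by positivity),
        div_le_div_iff₀ (by positivity) (by positivity)]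
      nlinarith [sq_nonneg ((k:ℝ)), sq_nonneg ((k:ℝ)+3), pow_pos h3 3, pow_pos h4 3, sq_nonneg ((k:ℝ)*((k:ℝ)+3))]
    calc ((k : ℝ) + 1) / ((k : ℝ) + 4) * ∑ t ∈ Finset.range (k + 1), A k * η t ^ 3 / A t
          + (3 / ((k : ℝ) + 1 + 3)) ^ 3
        ≤ ((k : ℝ) + 1) / ((k : ℝ) + 4) * (27 * ((k : ℝ) + 1) / ((k : ℝ) + 3) ^ 3)
          + (3 / ((k : ℝ) + 1 + 3)) ^ 3 := by
          gcongr
      _ ≤ 27 * ((k : ℝ) + 1 + 1) / ((k : ℝ) + 1 + 3) ^ 3 := hstep
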